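/- Let S and S' be antichain covers of Fin p. Then S' is a parent of S if and only if one of the following holds: (Rule 1) S' = S ∪ {c} for some c that is maximal independent of S; (Rule 2) S' = Min(S ∪ {σ}) for some σ : Finset (Fin p) such that (a) σ ⊊ σ' for some σ' ∈ S, (b) there exist no τ : Finset (Fin p) and σ'' ∈ S with σ ⊊ τ ⊊ σ'', (c) σ is not contained in any c that is maximal independent of S, and (d) Min(S ∪ {σ}) covers Fin p; (Rule 3) S' = Min(S ∪ {σ, σ'}) for two distinct finsets σ, σ' each satisfying conditions (a), (b) and (c) of Rule 2, such that neither Min(S ∪ {σ}) nor Min(S ∪ {σ'}) covers Fin p, while Min(S ∪ {σ, σ'}) covers Fin p. -/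

import Mathlib

/-- `X` covers `Fin p`. -/
def Covers {p : ℕ} (X : Finset (Finset (Fin p))) : Prop :=
  ∀ i : Fin p, ∃ σ ∈ X, i ∈ σ

/-- `S` is an antichain cover of `Fin p`. -/
def AntichainCover {p : ℕ} (S : Finset (Finset (Fin p))) : Prop :=
  IsAntichain (· ⊆ ·) (S : Set (Finset (Fin p))) ∧ Covers S

/-- `S ⪯ S'` : for every `σ ∈ S` there exists `σ' ∈ S'` with `σ' ⊆ σ`. -/
def Preceq {p : ℕ} (S S' : Finset (Finset (Fin p))) : Prop :=
  ∀ σ ∈ S, ∃ σ' ∈ S', σ' ⊆ σ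

/-- `S'` is a parent of `S` in the poset of antichain covers of `Fin p` ordered by `⪯`. -/
def Parent {p : ℕ} (S S' : Finset (Finset (Fin p))) : Prop :=
  Preceq S S' ∧ S ≠ S' ∧
    ¬ ∃ S'' : Finset (Finset (Fin p)),
        AntichainCover S'' ∧ S'' ≠ S ∧ S'' ≠ S' ∧ Preceq S S'' ∧ Preceq S'' S'

/-- `c` is independent of `S`: incomparable with every member of `S`. -/
def IndependentOf {p : ℕ} (c : Finset (Fin p)) (S : Finset (Finset (Fin p))) : Prop :=
  ∀ σ ∈ S, ¬ σ ⊆ c ∧ ¬ c ⊆ σ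

/-- `c` is maximal independent of `S`. -/
def MaxIndependentOf {p : ℕ} (c : Finset (Fin p)) (S : Finset (Finset (Fin p))) : Prop :=
  IndependentOf c S ∧ ∀ d : Finset (Fin p), c ⊂ d → ¬ IndependentOf d S

/-- The `⊆`-minimal elements of a finite family `X` of finsets. -/
def minElts {p : ℕ} (X : Finset (Finset (Fin p))) : Finset (Finset (Fin p)) :=
  X.filter fun σ => ∀ τ ∈ X, τ ⊆ σ → τ = σ

/-- Conditions (a), (b), (c) of Rule 2, for a candidate clause `σ`. -/
def Rule2Cond {p : ℕ} (S : Finset (Finset (Fin p))) (σ : Finset (Fin p)) : Prop :=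
  (∃ σ' ∈ S, σ ⊂ σ') ∧
  (¬ ∃ τ : Finset (Fin p), ∃ σ'' ∈ S, σ ⊂ τ ∧ τ ⊂ σ'') ∧
  (∀ c : Finset (Fin p), MaxIndependentOf c S → ¬ σ ⊆ c)

section AuxParentRules

open Finset

variable {p : ℕ}

lemma mem_minElts {X : Finset (Finset (Fin p))} {σ : Finset (Fin p)} :
    σ ∈ minElts X ↔ σ ∈ X ∧ ∀ τ ∈ X, τ ⊆ σ → τ = σ := by
  simp [minElts]

lemma minElts_subset {X : Finset (Finset (Fin p))} : minElts X ⊆ X :=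
  filter_subset _ _

lemma eq_of_antichain {S : Finset (Finset (Fin p))}
    (h : IsAntichain (· ⊆ ·) (S : Set (Finset (Fin p))))
    {x y : Finset (Fin p)} (hx : x ∈ S) (hy : y ∈ S) (hxy : x ⊆ y) : x = y := by
  by_contra hne
  exact h (by exact_mod_cast hx) (by exact_mod_cast hy) hne hxy

lemma exists_minElts_le {X : Finset (Finset (Fin p))} :
    ∀ σ ∈ X, ∃ μ ∈ minElts X, μ ⊆ σ := by
  intro σ
  induction σ using Finset.strongInductionOn with
  | _ σ ih =>
    intro hσ
    by_cases h : σ ∈ minElts X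
    · exact ⟨σ, h, subset_rfl⟩
    · rw [mem_minElts] at h
      push_neg at h
      obtain ⟨τ, hτX, hτσ, hne⟩ := h hσ
      obtain ⟨μ, hμ, hμτ⟩ := ih τ (Finset.ssubset_iff_subset_ne.mpr ⟨hτσ, hne⟩) hτX
      exact ⟨μ, hμ, hμτ.trans hτσ⟩

lemma isAntichain_minElts {X : Finset (Finset (Fin p))} :
    IsAntichain (· ⊆ ·) (minElts X : Set (Finset (Fin p))) := by
  intro a ha b hb hne hab
  rw [mem_coe, mem_minElts] at ha hb
  exact hne (hb.2 a ha.1 hab)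

lemma not_ssubset_of_preceq {S S' : Finset (Finset (Fin p))} (hpre : Preceq S S')
    (hS' : IsAntichain (· ⊆ ·) (S' : Set (Finset (Fin p))))
    {σ κ : Finset (Fin p)} (hσ : σ ∈ S) (hκ : κ ∈ S') : ¬ σ ⊂ κ := by
  intro hss
  obtain ⟨κ', hκ', hsub⟩ := hpre σ hσ
  have h1 : κ' = κ := eq_of_antichain hS' hκ' hκ (hsub.trans hss.subset)
  subst h1
  exact (Finset.ssubset_def.mp hss).2 hsub

lemma exists_maxIndep {S : Finset (Finset (Fin p))} {d : Finset (Fin p)}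
    (hd : IndependentOf d S) : ∃ c, d ⊆ c ∧ MaxIndependentOf c S := by
  classical
  obtain ⟨c, hc, hmax⟩ : ∃ c ∈ ((Finset.univ : Finset (Finset (Fin p))).filter
      fun e => d ⊆ e ∧ IndependentOf e S), ∀ x ∈ ((Finset.univ : Finset (Finset (Fin p))).filter
      fun e => d ⊆ e ∧ IndependentOf e S), ¬ c < x := by
    obtain ⟨c, hc⟩ := Finset.exists_maximal
      (s := (Finset.univ : Finset (Finset (Fin p))).filter fun e => d ⊆ e ∧ IndependentOf e S)
      ⟨d, by simp only [mem_filter, mem_univ, true_and]; exact ⟨subset_rfl, hd⟩⟩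
    exact ⟨c, hc.1, fun x hx hlt => absurd (hc.2 hx hlt.le) (not_le_of_gt hlt)⟩
  simp only [mem_filter, mem_univ, true_and] at hc
  refine ⟨c, hc.1, hc.2, fun e he hinde => ?_⟩
  exact hmax e (by simp only [mem_filter, mem_univ, true_and]; exact ⟨hc.1.trans he.subset, hinde⟩) he

lemma indep_not_mem {S : Finset (Finset (Fin p))} {c : Finset (Fin p)}
    (hc : IndependentOf c S) : c ∉ S := fun h => (hc c h).1 subset_rfl

lemma antichain_insert {S : Finset (Finset (Fin p))} {c : Finset (Fin p)}
    (hSa : IsAntichain (· ⊆ ·) (S : Set (Finset (Fin p)))) (hc : IndependentOf c S) :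
    IsAntichain (· ⊆ ·) ((insert c S : Finset (Finset (Fin p))) : Set (Finset (Fin p))) := by
  intro a ha b hb hne hab
  rw [mem_coe, mem_insert] at ha hb
  rcases ha with rfl | ha
  · rcases hb with rfl | hb
    · exact hne rfl
    · exact (hc b hb).2 hab
  · rcases hb with rfl | hb
    · exact (hc a ha).1 hab
    · exact hSa (by exact_mod_cast ha) (by exact_mod_cast hb) hne hab

lemma covers_insert {S : Finset (Finset (Fin p))} {c : Finset (Fin p)}
    (hSc : Covers S) : Covers (insert c S) := by
  intro i
  obtain ⟨σ, hσ, hi⟩ := hSc i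
  exact ⟨σ, mem_insert_of_mem hσ, hi⟩

lemma sigma_con {S S' : Finset (Finset (Fin p))}
    (hSa : IsAntichain (· ⊆ ·) (S : Set (Finset (Fin p))))
    (hS'a : IsAntichain (· ⊆ ·) (S' : Set (Finset (Fin p))))
    (hS'c : Covers S') (hpre : Preceq S S') {τ ρ : Finset (Fin p)}
    (hτS' : τ ∈ S') (hτS : τ ∉ S) (hτρ : τ ⊂ ρ)
    (hkey : ∀ σ ∈ S, σ ⊆ ρ → σ = ρ) :
    ∃ S'' : Finset (Finset (Fin p)), AntichainCover S'' ∧ Preceq S S'' ∧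
      Preceq S'' S' ∧ ρ ∈ S'' ∧ τ ∉ S'' ∧
      ∀ κ ∈ S', ¬ κ ⊆ ρ → κ ∉ S → κ ∈ S'' := by
  classical
  set X : Finset (Finset (Fin p)) :=
    insert ρ ((S'.filter fun κ => ¬ κ ⊆ ρ) ∪
      (S.filter fun σ => ∀ κ ∈ S', κ ⊆ σ → κ ⊆ ρ)) with hX
  have hmemX : ∀ ν : Finset (Fin p), ν ∈ X ↔
      (ν = ρ ∨ (ν ∈ S' ∧ ¬ ν ⊆ ρ) ∨ (ν ∈ S ∧ ∀ κ ∈ S', κ ⊆ ν → κ ⊆ ρ)) := by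
    intro ν
    simp only [hX, mem_insert, mem_union, mem_filter]
  -- ρ is minimal in X
  have hρmin : ρ ∈ minElts X := by
    rw [mem_minElts]
    refine ⟨by rw [hmemX]; left; rfl, ?_⟩
    intro ν hν hνρ
    rcases (hmemX ν).mp hν with rfl | ⟨_, hns⟩ | ⟨hνS, _⟩
    · rfl
    · exact absurd hνρ hns
    · exact hkey ν hνS hνρ
  -- elements of S' not below ρ are minimal in X
  have hκmin : ∀ κ ∈ S', ¬ κ ⊆ ρ → κ ∈ minElts X := by
    intro κ hκ hnκ
    rw [mem_minElts]
    refine ⟨by rw [hmemX]; right; left; exact ⟨hκ, hnκ⟩, ?_⟩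
    intro ν hν hνκ
    rcases (hmemX ν).mp hν with rfl | ⟨hν', _⟩ | ⟨hνS, hbad⟩
    · exfalso
      have hτκ : τ ≠ κ := fun h => hnκ (h ▸ hτρ.subset)
      exact hS'a (by exact_mod_cast hτS') (by exact_mod_cast hκ) hτκ
        (hτρ.subset.trans hνκ)
    · exact eq_of_antichain hS'a hν' hκ hνκ
    · by_cases hνκeq : ν = κ
      · exact hνκeq
      · exfalso
        · by_cases hcase : κ ∈ S
          · -- then ν ⊆ κ in S, so ν = κ
            exact hνκeq (eq_of_antichain hSa hνS hcase hνκ)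
          · exact (not_ssubset_of_preceq hpre hS'a hνS hκ)
              (Finset.ssubset_iff_subset_ne.mpr ⟨hνκ, hνκeq⟩)
  refine ⟨minElts X, ⟨isAntichain_minElts, ?_⟩, ?_, ?_, hρmin, ?_, fun κ hκ h1 _ => hκmin κ hκ h1⟩
  · -- Covers
    intro i
    obtain ⟨κ, hκ, hiκ⟩ := hS'c i
    by_cases h : κ ⊆ ρ
    · exact ⟨ρ, hρmin, h hiκ⟩
    · exact ⟨κ, hκmin κ hκ h, hiκ⟩
  · -- Preceq S (minElts X)
    intro σ hσ
    by_cases h : ∃ κ ∈ S', κ ⊆ σ ∧ ¬ κ ⊆ ρ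
    · obtain ⟨κ, hκ, hκσ, hnκ⟩ := h
      obtain ⟨μ, hμ, hμκ⟩ := exists_minElts_le κ (by rw [hmemX]; right; left; exact ⟨hκ, hnκ⟩)
      exact ⟨μ, hμ, hμκ.trans hκσ⟩
    · push_neg at h
      obtain ⟨μ, hμ, hμσ⟩ := exists_minElts_le σ
        (by rw [hmemX]; right; right; exact ⟨hσ, h⟩)
      exact ⟨μ, hμ, hμσ⟩
  · -- Preceq (minElts X) S'
    intro μ hμ
    rcases (hmemX μ).mp (minElts_subset hμ) with rfl | ⟨hμ', _⟩ | ⟨hμS, _⟩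
    · exact ⟨τ, hτS', hτρ.subset⟩
    · exact ⟨μ, hμ', subset_rfl⟩
    · exact hpre μ hμS
  · -- τ ∉ minElts X
    intro h
    rcases (hmemX τ).mp (minElts_subset h) with rfl | ⟨_, hns⟩ | ⟨hτS', _⟩
    · exact hτρ.ne rfl
    · exact hns hτρ.subset
    · exact hτS hτS'

lemma minElts_insert_rep {S : Finset (Finset (Fin p))} {τ : Finset (Fin p)}
    (hSa : IsAntichain (· ⊆ ·) (S : Set (Finset (Fin p))))
    (hmin : ∀ ν ∈ S, ¬ ν ⊆ τ) :
    minElts (insert τ S) = insert τ (S.filter fun σ => ¬ τ ⊆ σ) := by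
  classical
  ext κ
  simp only [mem_minElts, mem_insert, mem_filter]
  constructor
  · rintro ⟨hκ | hκ, hm⟩
    · exact Or.inl hκ
    · refine Or.inr ⟨hκ, fun hsub => ?_⟩
      have := hm τ (Or.inl rfl) hsub
      exact hmin κ hκ (this ▸ subset_rfl)
  · rintro (rfl | ⟨hκ, hnsub⟩)
    · refine ⟨Or.inl rfl, ?_⟩
      intro ν hν hνκ
      rcases hν with rfl | hν
      · rfl
      · exact absurd hνκ (hmin ν hν)
    · refine ⟨Or.inr hκ, ?_⟩
      intro ν hν hνκ
      rcases hν with rfl | hν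
      · exact absurd hνκ hnsub
      · exact eq_of_antichain hSa hν hκ hνκ

lemma minElts_insert2_rep {S : Finset (Finset (Fin p))} {τ1 τ2 : Finset (Fin p)}
    (hSa : IsAntichain (· ⊆ ·) (S : Set (Finset (Fin p))))
    (hmin1 : ∀ ν ∈ S, ¬ ν ⊆ τ1) (hmin2 : ∀ ν ∈ S, ¬ ν ⊆ τ2)
    (h12 : ¬ τ1 ⊆ τ2) (h21 : ¬ τ2 ⊆ τ1) :
    minElts (insert τ2 (insert τ1 S)) =
      insert τ1 (insert τ2 (S.filter fun σ => ¬ τ1 ⊆ σ ∧ ¬ τ2 ⊆ σ)) := by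
  classical
  ext κ
  simp only [mem_minElts, mem_insert, mem_filter]
  constructor
  · rintro ⟨hκ, hm⟩
    rcases hκ with rfl | rfl | hκ
    · exact Or.inr (Or.inl rfl)
    · exact Or.inl rfl
    · refine Or.inr (Or.inr ⟨hκ, fun hsub => ?_, fun hsub => ?_⟩)
      · have := hm τ1 (by simp) hsub
        exact hmin1 κ hκ (this ▸ subset_rfl)
      · have := hm τ2 (by simp) hsub
        exact hmin2 κ hκ (this ▸ subset_rfl)
  · rintro (rfl | rfl | ⟨hκ, h1, h2⟩)
    · refine ⟨Or.inr (Or.inl rfl), ?_⟩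
      intro ν hν hνκ
      rcases hν with rfl | hν
      · exact absurd hνκ h21
      · rcases hν with rfl | hν
        · rfl
        · exact absurd hνκ (hmin1 ν hν)
    · refine ⟨Or.inl rfl, ?_⟩
      intro ν hν hνκ
      rcases hν with rfl | hν
      · rfl
      · rcases hν with rfl | hν
        · exact absurd hνκ h12
        · exact absurd hνκ (hmin2 ν hν)
    · refine ⟨Or.inr (Or.inr hκ), ?_⟩
      intro ν hν hνκ
      rcases hν with rfl | hν
      · exact absurd hνκ h2
      · rcases hν with rfl | hν
        · exact absurd hνκ h1
        · exact eq_of_antichain hSa hν hκ hνκ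

theorem aux_forward (S S' : Finset (Finset (Fin p)))
    (hS : AntichainCover S) (hS' : AntichainCover S') (hPar : Parent S S') :
      (∃ c : Finset (Fin p), MaxIndependentOf c S ∧ S' = insert c S) ∨
      (∃ σ : Finset (Fin p), Rule2Cond S σ ∧ Covers (minElts (insert σ S)) ∧
        S' = minElts (insert σ S)) ∨
      (∃ σ σ' : Finset (Fin p), σ ≠ σ' ∧ Rule2Cond S σ ∧ Rule2Cond S σ' ∧
        ¬ Covers (minElts (insert σ S)) ∧ ¬ Covers (minElts (insert σ' S)) ∧
        Covers (minElts (insert σ' (insert σ S))) ∧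
        S' = minElts (insert σ' (insert σ S))) := by
  classical
  obtain ⟨hpre, hne, hno⟩ := hPar
  by_cases hI : ∃ c ∈ S', IndependentOf c S
  · -- Rule 1 branch
    left
    obtain ⟨c0, hc0S', hc0⟩ := hI
    -- no element of S' lies strictly below an element of S
    have hnoB : ∀ τ ∈ S', τ ∉ S → ¬ ∃ σ ∈ S, τ ⊂ σ := by
      rintro τ hτ hτS ⟨σ, hσ, hτσ⟩
      obtain ⟨c, hc0c, hcmax⟩ := exists_maxIndep hc0
      refine hno ⟨insert c S, ⟨antichain_insert hS.1 hcmax.1, covers_insert hS.2⟩, ?_, ?_, ?_, ?_⟩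
      · intro h
        exact indep_not_mem hcmax.1 (h ▸ mem_insert_self c S)
      · intro h
        have hσS' : σ ∈ S' := h ▸ mem_insert_of_mem hσ
        exact hS'.1 (by exact_mod_cast hτ) (by exact_mod_cast hσS') hτσ.ne hτσ.subset
      · intro ν hν
        exact ⟨ν, mem_insert_of_mem hν, subset_rfl⟩
      · intro ν hν
        rcases mem_insert.mp hν with rfl | hν
        · exact ⟨c0, hc0S', hc0c⟩
        · exact hpre ν hν
    have hclass : ∀ κ ∈ S', κ ∉ S → IndependentOf κ S := by
      intro κ hκ hκS σ hσ
      constructor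
      · intro hsub
        rcases eq_or_ne σ κ with rfl | hd
        · exact hκS hσ
        · exact (not_ssubset_of_preceq hpre hS'.1 hσ hκ)
            (Finset.ssubset_iff_subset_ne.mpr ⟨hsub, hd⟩)
      · intro hsub
        rcases eq_or_ne κ σ with rfl | hd
        · exact hκS hσ
        · exact hnoB κ hκ hκS ⟨σ, hσ, Finset.ssubset_iff_subset_ne.mpr ⟨hsub, hd⟩⟩
    have hSsub : S ⊆ S' := by
      intro σ hσ
      obtain ⟨κ, hκ, hκσ⟩ := hpre σ hσ
      by_cases hκS : κ ∈ S
      · exact (eq_of_antichain hS.1 hκS hσ hκσ) ▸ hκ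
      · exact absurd hκσ ((hclass κ hκ hκS σ hσ).2)
    have hdiff : ∃ c1 ∈ S', c1 ∉ S := by
      by_contra h
      push_neg at h
      exact hne (Finset.Subset.antisymm hSsub h)
    obtain ⟨c1, hc1S', hc1S⟩ := hdiff
    have hc1 : IndependentOf c1 S := hclass c1 hc1S' hc1S
    have hS'eq : S' = insert c1 S := by
      apply Finset.Subset.antisymm
      · intro κ hκ
        by_cases hκS : κ ∈ S
        · exact mem_insert_of_mem hκS
        · rcases eq_or_ne κ c1 with rfl | hd
          · exact mem_insert_self _ _
          · exfalso
            refine hno ⟨insert c1 S,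
              ⟨antichain_insert hS.1 hc1, covers_insert hS.2⟩, ?_, ?_, ?_, ?_⟩
            · intro h
              exact hc1S (h ▸ mem_insert_self c1 S)
            · intro h
              have : κ ∈ insert c1 S := h ▸ hκ
              rcases mem_insert.mp this with rfl | hκ2
              · exact hd rfl
              · exact hκS hκ2
            · intro ν hν; exact ⟨ν, mem_insert_of_mem hν, subset_rfl⟩
            · intro ν hν
              rcases mem_insert.mp hν with rfl | hν
              · exact ⟨ν, hc1S', subset_rfl⟩
              · exact hpre ν hν
      · intro κ hκ
        rcases mem_insert.mp hκ with rfl | hκ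
        · exact hc1S'
        · exact hSsub hκ
    refine ⟨c1, ⟨hc1, ?_⟩, hS'eq⟩
    intro d hd hdind
    refine hno ⟨insert d S, ⟨antichain_insert hS.1 hdind, covers_insert hS.2⟩, ?_, ?_, ?_, ?_⟩
    · intro h
      exact indep_not_mem hdind (h ▸ mem_insert_self d S)
    · intro h
      have : d ∈ S' := h ▸ mem_insert_self d S
      rw [hS'eq] at this
      rcases mem_insert.mp this with rfl | h2
      · exact hd.ne rfl
      · exact indep_not_mem hdind h2
    · intro ν hν; exact ⟨ν, mem_insert_of_mem hν, subset_rfl⟩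
    · intro ν hν
      rcases mem_insert.mp hν with rfl | hν
      · exact ⟨c1, hc1S', hd.subset⟩
      · exact hpre ν hν
  · -- Rules 2 / 3 branch
    push_neg at hI
    have hclass : ∀ κ ∈ S', κ ∉ S → ∃ σ ∈ S, κ ⊂ σ := by
      intro κ hκ hκS
      by_contra h
      push_neg at h
      refine hI κ hκ ?_
      intro σ hσ
      constructor
      · intro hsub
        rcases eq_or_ne σ κ with rfl | hd
        · exact hκS hσ
        · exact (not_ssubset_of_preceq hpre hS'.1 hσ hκ)
            (Finset.ssubset_iff_subset_ne.mpr ⟨hsub, hd⟩)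
      · intro hsub
        rcases eq_or_ne κ σ with rfl | hd
        · exact hκS hσ
        · exact (h σ hσ) (Finset.ssubset_iff_subset_ne.mpr ⟨hsub, hd⟩)
    set B : Finset (Finset (Fin p)) := S'.filter (· ∉ S) with hB
    have hBmem : ∀ κ, κ ∈ B ↔ κ ∈ S' ∧ κ ∉ S := by
      intro κ; simp [hB]
    have hBne : B.Nonempty := by
      rw [Finset.nonempty_iff_ne_empty]
      intro h
      have hsub' : S' ⊆ S := by
        intro κ hκ
        by_contra hκS
        have : κ ∈ B := (hBmem κ).mpr ⟨hκ, hκS⟩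
        simp [h] at this
      have hsub : S ⊆ S' := by
        intro σ hσ
        obtain ⟨κ, hκ, hκσ⟩ := hpre σ hσ
        exact (eq_of_antichain hS.1 (hsub' hκ) hσ hκσ) ▸ hκ
      exact hne (Finset.Subset.antisymm hsub hsub')
    have hminB : ∀ τ ∈ B, ∀ ν ∈ S, ¬ ν ⊆ τ := by
      intro τ hτ ν hν hsub
      obtain ⟨hτS', hτS⟩ := (hBmem τ).mp hτ
      obtain ⟨σ'', hσ'', hτσ''⟩ := hclass τ hτS' hτS
      have : ν ⊂ σ'' := lt_of_le_of_lt hsub hτσ''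
      exact hS.1 (by exact_mod_cast hν) (by exact_mod_cast hσ'') this.ne this.subset
    have hbB : ∀ τ ∈ B, ¬ ∃ ν : Finset (Fin p), ∃ σ'' ∈ S, τ ⊂ ν ∧ ν ⊂ σ'' := by
      rintro τ hτ ⟨ν, σ'', hσ'', hτν, hνσ⟩
      obtain ⟨hτS', hτS⟩ := (hBmem τ).mp hτ
      obtain ⟨x, hxν, hxτ⟩ := Finset.exists_of_ssubset hτν
      have hτρ : τ ⊂ insert x τ := Finset.ssubset_insert hxτ
      have hρν : insert x τ ⊆ ν := Finset.insert_subset hxν hτν.subset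
      have hkey : ∀ σ ∈ S, σ ⊆ insert x τ → σ = insert x τ := by
        intro σ hσ hsub
        exfalso
        have : σ ⊂ σ'' := lt_of_le_of_lt (hsub.trans hρν) hνσ
        exact hS.1 (by exact_mod_cast hσ) (by exact_mod_cast hσ'') this.ne this.subset
      have hρnotS : insert x τ ∉ S := by
        intro hmem
        have h2 : insert x τ ⊂ σ'' := lt_of_le_of_lt hρν hνσ
        exact hS.1 (by exact_mod_cast hmem) (by exact_mod_cast hσ'') h2.ne h2.subset
      obtain ⟨S'', hAC, hp1, hp2, hρmem, hτnot, _⟩ :=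
        sigma_con hS.1 hS'.1 hS'.2 hpre hτS' hτS hτρ hkey
      refine hno ⟨S'', hAC, ?_, ?_, hp1, hp2⟩
      · intro h
        exact hρnotS (h ▸ hρmem)
      · intro h
        exact hτnot (h ▸ hτS')
    have hcB : ∀ τ ∈ B, ∀ c : Finset (Fin p), MaxIndependentOf c S → ¬ τ ⊆ c := by
      intro τ hτ c hcmax hτc
      obtain ⟨hτS', hτS⟩ := (hBmem τ).mp hτ
      obtain ⟨σ'', hσ'', hτσ''⟩ := hclass τ hτS' hτS
      refine hno ⟨insert c S, ⟨antichain_insert hS.1 hcmax.1, covers_insert hS.2⟩, ?_, ?_, ?_, ?_⟩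
      · intro h
        exact indep_not_mem hcmax.1 (h ▸ mem_insert_self c S)
      · intro h
        have hσS' : σ'' ∈ S' := h ▸ mem_insert_of_mem hσ''
        exact hS'.1 (by exact_mod_cast hτS') (by exact_mod_cast hσS') hτσ''.ne hτσ''.subset
      · intro σ hσ; exact ⟨σ, mem_insert_of_mem hσ, subset_rfl⟩
      · intro ν hν
        rcases mem_insert.mp hν with rfl | hν
        · exact ⟨τ, hτS', hτc⟩
        · exact hpre ν hν
    have hR2 : ∀ τ ∈ B, Rule2Cond S τ := by
      intro τ hτ
      obtain ⟨hτS', hτS⟩ := (hBmem τ).mp hτ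
      exact ⟨hclass τ hτS' hτS, hbB τ hτ, hcB τ hτ⟩
    have hrep : ∀ κ, κ ∈ S' ↔ (κ ∈ B ∨ (κ ∈ S ∧ ∀ τ ∈ B, ¬ τ ⊆ κ)) := by
      intro κ
      constructor
      · intro hκ
        by_cases hκS : κ ∈ S
        · refine Or.inr ⟨hκS, ?_⟩
          intro τ hτ hsub
          obtain ⟨hτS', hτS⟩ := (hBmem τ).mp hτ
          exact hτS ((eq_of_antichain hS'.1 hτS' hκ hsub) ▸ hκS)
        · exact Or.inl ((hBmem κ).mpr ⟨hκ, hκS⟩)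
      · rintro (hκ | ⟨hκS, hκn⟩)
        · exact ((hBmem κ).mp hκ).1
        · obtain ⟨κ', hκ', hκκ'⟩ := hpre κ hκS
          by_cases hκ'S : κ' ∈ S
          · exact (eq_of_antichain hS.1 hκ'S hκS hκκ') ▸ hκ'
          · exact absurd hκκ' (hκn κ' ((hBmem κ').mpr ⟨hκ', hκ'S⟩))
    obtain ⟨τ1, hτ1⟩ := hBne
    obtain ⟨hτ1S', hτ1S⟩ := (hBmem τ1).mp hτ1
    by_cases hB1 : ∀ κ ∈ B, κ = τ1
    · -- Rule 2
      right; left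
      have heq : S' = minElts (insert τ1 S) := by
        rw [minElts_insert_rep hS.1 (hminB τ1 hτ1)]
        ext κ
        rw [mem_insert, mem_filter]
        constructor
        · intro hκ
          rcases (hrep κ).mp hκ with hκB | ⟨hκS, hκn⟩
          · exact Or.inl (hB1 κ hκB)
          · exact Or.inr ⟨hκS, hκn τ1 hτ1⟩
        · rintro (rfl | ⟨hκS, hκn⟩)
          · exact hτ1S'
          · refine (hrep κ).mpr (Or.inr ⟨hκS, ?_⟩)
            intro τ hτ
            exact (hB1 τ hτ) ▸ hκn
      exact ⟨τ1, hR2 τ1 hτ1, heq ▸ hS'.2, heq⟩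
    · push_neg at hB1
      obtain ⟨τ2, hτ2, hτ2ne⟩ := hB1
      obtain ⟨hτ2S', hτ2S⟩ := (hBmem τ2).mp hτ2
      have hnc : ∀ τ ∈ B, ∀ τ' ∈ B, τ ≠ τ' → ¬ τ ⊆ τ' := by
        intro τ hτ τ' hτ' hd hsub
        exact hd (eq_of_antichain hS'.1 ((hBmem τ).mp hτ).1 ((hBmem τ').mp hτ').1 hsub)
      -- single insertions do not cover (given a second element of B)
      have hsingle : ∀ τ ∈ B, ∀ τ' ∈ B, τ' ≠ τ → ¬ Covers (minElts (insert τ S)) := by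
        intro τ hτ τ' hτ' hd hcov
        obtain ⟨hτS', hτS⟩ := (hBmem τ).mp hτ
        obtain ⟨hτ'S', hτ'S⟩ := (hBmem τ').mp hτ'
        have hM := minElts_insert_rep hS.1 (hminB τ hτ)
        refine hno ⟨minElts (insert τ S), ⟨isAntichain_minElts, hcov⟩, ?_, ?_, ?_, ?_⟩
        · intro h
          have : τ ∈ S := h ▸ (hM ▸ mem_insert_self τ _)
          exact hτS this
        · intro h
          have : τ' ∈ minElts (insert τ S) := h.symm ▸ hτ'S'
          rw [hM] at this
          rcases mem_insert.mp this with rfl | h2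
          · exact hd rfl
          · exact hτ'S (mem_filter.mp h2).1
        · intro σ hσ
          by_cases hsub : τ ⊆ σ
          · exact ⟨τ, hM ▸ mem_insert_self τ _, hsub⟩
          · exact ⟨σ, hM ▸ mem_insert_of_mem (mem_filter.mpr ⟨hσ, hsub⟩), subset_rfl⟩
        · intro ν hν
          rw [hM] at hν
          rcases mem_insert.mp hν with rfl | hν
          · exact ⟨ν, hτS', subset_rfl⟩
          · exact hpre ν (mem_filter.mp hν).1
      by_cases hB2 : ∀ κ ∈ B, κ = τ1 ∨ κ = τ2
      · -- Rule 3
        right; right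
        have heq : S' = minElts (insert τ2 (insert τ1 S)) := by
          rw [minElts_insert2_rep hS.1 (hminB τ1 hτ1) (hminB τ2 hτ2)
            (hnc τ1 hτ1 τ2 hτ2 (Ne.symm hτ2ne)) (hnc τ2 hτ2 τ1 hτ1 hτ2ne)]
          ext κ
          rw [mem_insert, mem_insert, mem_filter]
          constructor
          · intro hκ
            rcases (hrep κ).mp hκ with hκB | ⟨hκS, hκn⟩
            · rcases hB2 κ hκB with rfl | rfl
              · exact Or.inl rfl
              · exact Or.inr (Or.inl rfl)
            · exact Or.inr (Or.inr ⟨hκS, hκn τ1 hτ1, hκn τ2 hτ2⟩)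
          · rintro (rfl | rfl | ⟨hκS, h1, h2⟩)
            · exact hτ1S'
            · exact hτ2S'
            · refine (hrep κ).mpr (Or.inr ⟨hκS, ?_⟩)
              intro τ hτ
              rcases hB2 τ hτ with rfl | rfl
              · exact h1
              · exact h2
        exact ⟨τ1, τ2, Ne.symm hτ2ne, hR2 τ1 hτ1, hR2 τ2 hτ2,
          hsingle τ1 hτ1 τ2 hτ2 hτ2ne,
          hsingle τ2 hτ2 τ1 hτ1 (Ne.symm hτ2ne), heq ▸ hS'.2, heq⟩
      · -- |B| ≥ 3 : contradiction
        exfalso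
        push_neg at hB2
        obtain ⟨τ3, hτ3, hτ3ne1, hτ3ne2⟩ := hB2
        obtain ⟨hτ3S', hτ3S⟩ := (hBmem τ3).mp hτ3
        -- step β : single insertion of τ1 fails to cover
        have hncov1 : ¬ Covers (minElts (insert τ1 S)) := hsingle τ1 hτ1 τ2 hτ2 hτ2ne
        have hM1 := minElts_insert_rep hS.1 (hminB τ1 hτ1)
        obtain ⟨j, hj⟩ : ∃ j : Fin p, ∀ μ ∈ minElts (insert τ1 S), j ∉ μ := by
          by_contra h
          push_neg at h
          exact hncov1 h
        have hjτ1 : j ∉ τ1 := hj τ1 (hM1 ▸ mem_insert_self τ1 _)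
        obtain ⟨σ0, hσ0S, hjσ0⟩ := hS.2 j
        have hτ1σ0 : τ1 ⊆ σ0 := by
          by_contra hns
          exact hj σ0 (hM1 ▸ mem_insert_of_mem (mem_filter.mpr ⟨hσ0S, hns⟩)) hjσ0
        have hσ0eq : σ0 = insert j τ1 := by
          apply Finset.Subset.antisymm
          · intro y hy
            by_contra hyn
            rw [mem_insert] at hyn
            push_neg at hyn
            refine hbB τ1 hτ1 ⟨insert j τ1, σ0, hσ0S, Finset.ssubset_insert hjτ1, ?_⟩
            rw [Finset.ssubset_iff_subset_ne]
            refine ⟨Finset.insert_subset hjσ0 hτ1σ0, ?_⟩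
            intro h
            rw [← h] at hy
            rcases mem_insert.mp hy with rfl | hyτ
            · exact hyn.1 rfl
            · exact hyn.2 hyτ
          · exact Finset.insert_subset hjσ0 hτ1σ0
        -- step γ : every element of B is contained in σ0
        have hγ : ∀ κ ∈ B, κ ⊆ σ0 := by
          intro κ hκ
          by_contra hnsub
          obtain ⟨hκS', hκS⟩ := (hBmem κ).mp hκ
          have hkey : ∀ σ ∈ S, σ ⊆ σ0 → σ = σ0 := fun σ hσ h => eq_of_antichain hS.1 hσ hσ0S h
          have hτ1σ0' : τ1 ⊂ σ0 := Finset.ssubset_iff_subset_ne.mpr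
            ⟨hτ1σ0, fun h => hjτ1 (h ▸ hjσ0)⟩
          obtain ⟨S'', hAC, hp1, hp2, hρmem, hτnot, hextra⟩ :=
            sigma_con hS.1 hS'.1 hS'.2 hpre hτ1S' hτ1S hτ1σ0' hkey
          refine hno ⟨S'', hAC, ?_, ?_, hp1, hp2⟩
          · intro h
            exact hκS (h ▸ hextra κ hκS' hnsub hκS)
          · intro h
            exact hτnot (h ▸ hτ1S')
        -- j belongs to τ2 (and τ3)
        have hjmem : ∀ κ ∈ B, κ ≠ τ1 → j ∈ κ := by
          intro κ hκ hd
          by_contra hjn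
          have h1 : κ ⊆ τ1 := by
            intro z hz
            have hzσ0 : z ∈ σ0 := hγ κ hκ hz
            rw [hσ0eq, mem_insert] at hzσ0
            rcases hzσ0 with rfl | hzτ1
            · exact absurd hz hjn
            · exact hzτ1
          exact hnc κ hκ τ1 hτ1 hd h1
        -- step ε : pair covers
        have h12 : ¬ τ1 ⊆ τ2 := hnc τ1 hτ1 τ2 hτ2 (Ne.symm hτ2ne)
        have h21 : ¬ τ2 ⊆ τ1 := hnc τ2 hτ2 τ1 hτ1 hτ2ne
        have hM2 := minElts_insert2_rep hS.1 (hminB τ1 hτ1) (hminB τ2 hτ2) h12 h21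
        have hcov2 : Covers (minElts (insert τ2 (insert τ1 S))) := by
          rw [hM2]
          intro i
          obtain ⟨κ, hκS', hiκ⟩ := hS'.2 i
          rcases (hrep κ).mp hκS' with hκB | ⟨hκS, hκn⟩
          · have hiσ0 : i ∈ σ0 := hγ κ hκB hiκ
            rw [hσ0eq, mem_insert] at hiσ0
            rcases hiσ0 with rfl | hiτ1
            · exact ⟨τ2, mem_insert_of_mem (mem_insert_self _ _), hjmem τ2 hτ2 hτ2ne⟩
            · exact ⟨τ1, mem_insert_self _ _, hiτ1⟩
          · exact ⟨κ, mem_insert_of_mem (mem_insert_of_mem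
              (mem_filter.mpr ⟨hκS, hκn τ1 hτ1, hκn τ2 hτ2⟩)), hiκ⟩
        refine hno ⟨minElts (insert τ2 (insert τ1 S)), ⟨isAntichain_minElts, hcov2⟩, ?_, ?_, ?_, ?_⟩
        · intro h
          have : τ1 ∈ S := h ▸ (hM2 ▸ mem_insert_self τ1 _)
          exact hτ1S this
        · intro h
          have : τ3 ∈ minElts (insert τ2 (insert τ1 S)) := h.symm ▸ hτ3S'
          rw [hM2] at this
          rcases mem_insert.mp this with rfl | h2
          · exact hτ3ne1 rfl
          · rcases mem_insert.mp h2 with rfl | h3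
            · exact hτ3ne2 rfl
            · exact hτ3S (mem_filter.mp h3).1
        · intro σ hσ
          by_cases hs1 : τ1 ⊆ σ
          · exact ⟨τ1, hM2 ▸ mem_insert_self τ1 _, hs1⟩
          · by_cases hs2 : τ2 ⊆ σ
            · exact ⟨τ2, hM2 ▸ mem_insert_of_mem (mem_insert_self _ _), hs2⟩
            · exact ⟨σ, hM2 ▸ mem_insert_of_mem (mem_insert_of_mem
                (mem_filter.mpr ⟨hσ, hs1, hs2⟩)), subset_rfl⟩
        · intro ν hν
          rw [hM2] at hν
          rcases mem_insert.mp hν with rfl | hν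
          · exact ⟨ν, hτ1S', subset_rfl⟩
          · rcases mem_insert.mp hν with rfl | hν
            · exact ⟨ν, hτ2S', subset_rfl⟩
            · exact hpre ν (mem_filter.mp hν).1

theorem aux_backward1 (S : Finset (Finset (Fin p))) (hS : AntichainCover S)
    (c : Finset (Fin p)) (hcmax : MaxIndependentOf c S) : Parent S (insert c S) := by
  classical
  have hcS : c ∉ S := indep_not_mem hcmax.1
  refine ⟨?_, ?_, ?_⟩
  · intro σ hσ; exact ⟨σ, mem_insert_of_mem hσ, subset_rfl⟩
  · intro h; apply hcS; rw [h]; exact mem_insert_self c S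
  · rintro ⟨S'', ⟨hA'', hC''⟩, hne1, hne2, h1, h2⟩
    have hSsub : S ⊆ S'' := by
      intro σ hσ
      obtain ⟨τ, hτ, hτσ⟩ := h1 σ hσ
      obtain ⟨κ, hκ, hκτ⟩ := h2 τ hτ
      rcases mem_insert.mp hκ with rfl | hκS
      · exact absurd (hκτ.trans hτσ) (hcmax.1 σ hσ).2
      · have hκeq : κ = σ := eq_of_antichain hS.1 hκS hσ (hκτ.trans hτσ)
        have hτeq : τ = σ := Finset.Subset.antisymm hτσ (hκeq ▸ hκτ)
        exact hτeq ▸ hτ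
    have hsub : S'' ⊆ insert c S := by
      intro τ hτ
      obtain ⟨κ, hκ, hκτ⟩ := h2 τ hτ
      rcases mem_insert.mp hκ with rfl | hκS
      · -- κ = c
        rcases eq_or_ne τ κ with rfl | hd
        · exact mem_insert_self _ _
        · exfalso
          have hss : κ ⊂ τ := Finset.ssubset_iff_subset_ne.mpr ⟨hκτ, hd.symm⟩
          have hni := hcmax.2 τ hss
          rw [IndependentOf] at hni
          push_neg at hni
          obtain ⟨σ, hσS, himp⟩ := hni
          by_cases hst : σ ⊆ τ
          · have : σ = τ := eq_of_antichain hA''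
              (by exact_mod_cast hSsub hσS) (by exact_mod_cast hτ) hst
            exact (hcmax.1 σ hσS).2 (this ▸ hκτ)
          · exact (hcmax.1 σ hσS).2 (hκτ.trans (himp hst))
      · have : κ = τ := eq_of_antichain hA''
          (by exact_mod_cast hSsub hκS) (by exact_mod_cast hτ) hκτ
        exact mem_insert_of_mem (this ▸ hκS)
    by_cases hc'' : c ∈ S''
    · refine hne2 (Finset.Subset.antisymm hsub ?_)
      intro κ hκ
      rcases mem_insert.mp hκ with rfl | hκS
      · exact hc''
      · exact hSsub hκS
    · refine hne1 (Finset.Subset.antisymm ?_ hSsub)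
      intro τ hτ
      rcases mem_insert.mp (hsub hτ) with rfl | hτS
      · exact absurd hτ hc''
      · exact hτS

theorem aux_backward2 (S : Finset (Finset (Fin p))) (hS : AntichainCover S)
    (σ0 : Finset (Fin p)) (hR2 : Rule2Cond S σ0) :
    Parent S (minElts (insert σ0 S)) := by
  classical
  obtain ⟨⟨σ', hσ'S, hσ0σ'⟩, hbb, hcc⟩ := hR2
  have hσ0S : σ0 ∉ S := by
    intro h
    exact hS.1 (by exact_mod_cast h) (by exact_mod_cast hσ'S) hσ0σ'.ne hσ0σ'.subset
  have hminn : ∀ ν ∈ S, ¬ ν ⊆ σ0 := by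
    intro ν hν hsub
    have : ν ⊂ σ' := lt_of_le_of_lt hsub hσ0σ'
    exact hS.1 (by exact_mod_cast hν) (by exact_mod_cast hσ'S) this.ne this.subset
  have hM := minElts_insert_rep hS.1 hminn
  refine ⟨?_, ?_, ?_⟩
  · intro σ hσ
    by_cases hsub : σ0 ⊆ σ
    · exact ⟨σ0, hM ▸ mem_insert_self σ0 _, hsub⟩
    · exact ⟨σ, hM ▸ mem_insert_of_mem (mem_filter.mpr ⟨hσ, hsub⟩), subset_rfl⟩
  · intro h
    exact hσ0S (h ▸ (hM ▸ mem_insert_self σ0 _))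
  · rintro ⟨S'', ⟨hA'', hC''⟩, hne1, hne2, h1, h2⟩
    have hcls : ∀ τ ∈ S'', τ = σ0 ∨ τ ∈ S := by
      intro τ hτ
      obtain ⟨κ, hκ, hκτ⟩ := h2 τ hτ
      rw [hM] at hκ
      rcases mem_insert.mp hκ with rfl | hκ'
      · -- κ = σ0 ⊆ τ
        by_cases hτS : τ ∈ S
        · exact Or.inr hτS
        · rcases eq_or_ne τ κ with rfl | hd
          · exact Or.inl rfl
          · exfalso
            have hκτ' : κ ⊂ τ := Finset.ssubset_iff_subset_ne.mpr ⟨hκτ, hd.symm⟩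
            by_cases hbig : ∃ ν ∈ S, τ ⊆ ν
            · obtain ⟨ν, hνS, hτν⟩ := hbig
              have : τ ⊂ ν := Finset.ssubset_iff_subset_ne.mpr
                ⟨hτν, fun h => hτS (h ▸ hνS)⟩
              exact hbb ⟨τ, ν, hνS, hκτ', this⟩
            · push_neg at hbig
              have hindep : IndependentOf τ S := by
                intro ν hνS
                refine ⟨?_, hbig ν hνS⟩
                intro hsub
                rcases eq_or_ne ν τ with rfl | hd2
                · exact hτS hνS
                · exact (not_ssubset_of_preceq h1 hA'' hνS hτ)
                    (Finset.ssubset_iff_subset_ne.mpr ⟨hsub, hd2⟩)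
              obtain ⟨cc, hτcc, hccmax⟩ := exists_maxIndep hindep
              exact hcc cc hccmax (hκτ.trans hτcc)
      · -- κ ∈ S
        have hκS := (mem_filter.mp hκ').1
        rcases eq_or_ne κ τ with rfl | hd
        · exact Or.inr hκS
        · exact absurd (Finset.ssubset_iff_subset_ne.mpr ⟨hκτ, hd⟩)
            (not_ssubset_of_preceq h1 hA'' hκS hτ)
    by_cases hσ0'' : σ0 ∈ S''
    · refine hne2 ?_
      rw [hM]
      apply Finset.Subset.antisymm
      · intro τ hτ
        rcases hcls τ hτ with rfl | hτS
        · exact mem_insert_self _ _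
        · refine mem_insert_of_mem (mem_filter.mpr ⟨hτS, ?_⟩)
          intro hsub
          have : σ0 = τ := eq_of_antichain hA''
            (by exact_mod_cast hσ0'') (by exact_mod_cast hτ) hsub
          exact hσ0S (this ▸ hτS)
      · intro κ hκ
        rcases mem_insert.mp hκ with rfl | hκ'
        · exact hσ0''
        · obtain ⟨hκS, hnsub⟩ := mem_filter.mp hκ'
          obtain ⟨τ, hτ, hτκ⟩ := h1 κ hκS
          rcases hcls τ hτ with rfl | hτS
          · exact absurd hτκ hnsub
          · exact (eq_of_antichain hS.1 hτS hκS hτκ) ▸ hτ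
    · refine hne1 ?_
      apply Finset.Subset.antisymm
      · intro τ hτ
        rcases hcls τ hτ with rfl | hτS
        · exact absurd hτ hσ0''
        · exact hτS
      · intro σ hσ
        obtain ⟨τ, hτ, hτσ⟩ := h1 σ hσ
        rcases hcls τ hτ with rfl | hτS
        · exact absurd hτ hσ0''
        · exact (eq_of_antichain hS.1 hτS hσ hτσ) ▸ hτ

theorem aux_backward3 (S : Finset (Finset (Fin p))) (hS : AntichainCover S)
    (σ1 σ2 : Finset (Fin p)) (hne12 : σ1 ≠ σ2)
    (hR21 : Rule2Cond S σ1) (hR22 : Rule2Cond S σ2)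
    (hnc1 : ¬ Covers (minElts (insert σ1 S)))
    (hnc2 : ¬ Covers (minElts (insert σ2 S))) :
    Parent S (minElts (insert σ2 (insert σ1 S))) := by
  classical
  obtain ⟨⟨σ1', hσ1'S, hss1⟩, hbb1, hcc1⟩ := hR21
  obtain ⟨⟨σ2', hσ2'S, hss2⟩, hbb2, hcc2⟩ := hR22
  have hσ1S : σ1 ∉ S := by
    intro h
    exact hS.1 (by exact_mod_cast h) (by exact_mod_cast hσ1'S) hss1.ne hss1.subset
  have hσ2S : σ2 ∉ S := by
    intro h
    exact hS.1 (by exact_mod_cast h) (by exact_mod_cast hσ2'S) hss2.ne hss2.subset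
  have hminn1 : ∀ ν ∈ S, ¬ ν ⊆ σ1 := by
    intro ν hν hsub
    have : ν ⊂ σ1' := lt_of_le_of_lt hsub hss1
    exact hS.1 (by exact_mod_cast hν) (by exact_mod_cast hσ1'S) this.ne this.subset
  have hminn2 : ∀ ν ∈ S, ¬ ν ⊆ σ2 := by
    intro ν hν hsub
    have : ν ⊂ σ2' := lt_of_le_of_lt hsub hss2
    exact hS.1 (by exact_mod_cast hν) (by exact_mod_cast hσ2'S) this.ne this.subset
  have h12 : ¬ σ1 ⊆ σ2 := by
    intro hsub
    exact hbb1 ⟨σ2, σ2', hσ2'S, Finset.ssubset_iff_subset_ne.mpr ⟨hsub, hne12⟩, hss2⟩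
  have h21 : ¬ σ2 ⊆ σ1 := by
    intro hsub
    exact hbb2 ⟨σ1, σ1', hσ1'S, Finset.ssubset_iff_subset_ne.mpr ⟨hsub, hne12.symm⟩, hss1⟩
  have hM := minElts_insert2_rep hS.1 hminn1 hminn2 h12 h21
  have hM1 := minElts_insert_rep hS.1 hminn1
  have hM2 := minElts_insert_rep hS.1 hminn2
  refine ⟨?_, ?_, ?_⟩
  · intro σ hσ
    by_cases hs1 : σ1 ⊆ σ
    · exact ⟨σ1, hM ▸ mem_insert_self σ1 _, hs1⟩
    · by_cases hs2 : σ2 ⊆ σ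
      · exact ⟨σ2, hM ▸ mem_insert_of_mem (mem_insert_self _ _), hs2⟩
      · exact ⟨σ, hM ▸ mem_insert_of_mem (mem_insert_of_mem
          (mem_filter.mpr ⟨hσ, hs1, hs2⟩)), subset_rfl⟩
  · intro h
    exact hσ1S (h ▸ (hM ▸ mem_insert_self σ1 _))
  · rintro ⟨S'', ⟨hA'', hC''⟩, hne1, hne2, h1, h2⟩
    -- classification of elements of S''
    have hgen : ∀ τ ∈ S'', ∀ κ0 : Finset (Fin p), κ0 ⊆ τ → κ0 ∉ S →
        (¬ ∃ ν : Finset (Fin p), ∃ s'' ∈ S, κ0 ⊂ ν ∧ ν ⊂ s'') →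
        (∀ c : Finset (Fin p), MaxIndependentOf c S → ¬ κ0 ⊆ c) →
        τ = κ0 ∨ τ ∈ S := by
      intro τ hτ κ0 hκτ hκ0S hbb0 hcc0
      by_cases hτS : τ ∈ S
      · exact Or.inr hτS
      · rcases eq_or_ne τ κ0 with rfl | hd
        · exact Or.inl rfl
        · exfalso
          have hκτ' : κ0 ⊂ τ := Finset.ssubset_iff_subset_ne.mpr ⟨hκτ, hd.symm⟩
          by_cases hbig : ∃ ν ∈ S, τ ⊆ ν
          · obtain ⟨ν, hνS, hτν⟩ := hbig
            have : τ ⊂ ν := Finset.ssubset_iff_subset_ne.mpr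
              ⟨hτν, fun h => hτS (h ▸ hνS)⟩
            exact hbb0 ⟨τ, ν, hνS, hκτ', this⟩
          · push_neg at hbig
            have hindep : IndependentOf τ S := by
              intro ν hνS
              refine ⟨?_, hbig ν hνS⟩
              intro hsub
              rcases eq_or_ne ν τ with rfl | hd2
              · exact hτS hνS
              · exact (not_ssubset_of_preceq h1 hA'' hνS hτ)
                  (Finset.ssubset_iff_subset_ne.mpr ⟨hsub, hd2⟩)
            obtain ⟨cc, hτcc, hccmax⟩ := exists_maxIndep hindep
            exact hcc0 cc hccmax (hκτ.trans hτcc)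
    have hcls : ∀ τ ∈ S'', τ = σ1 ∨ τ = σ2 ∨ τ ∈ S := by
      intro τ hτ
      obtain ⟨κ, hκ, hκτ⟩ := h2 τ hτ
      rw [hM] at hκ
      rcases mem_insert.mp hκ with rfl | hκ'
      · rcases hgen τ hτ κ hκτ hσ1S hbb1 hcc1 with h | h
        · exact Or.inl h
        · exact Or.inr (Or.inr h)
      · rcases mem_insert.mp hκ' with rfl | hκ''
        · rcases hgen τ hτ κ hκτ hσ2S hbb2 hcc2 with h | h
          · exact Or.inr (Or.inl h)
          · exact Or.inr (Or.inr h)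
        · have hκS := (mem_filter.mp hκ'').1
          rcases eq_or_ne κ τ with rfl | hd
          · exact Or.inr (Or.inr hκS)
          · exact absurd (Finset.ssubset_iff_subset_ne.mpr ⟨hκτ, hd⟩)
              (not_ssubset_of_preceq h1 hA'' hκS hτ)
    -- helper for S-elements in S''
    have hSin : ∀ τ ∈ S'', τ ∈ S → (σ1 ∈ S'' → ¬ σ1 ⊆ τ) ∧ (σ2 ∈ S'' → ¬ σ2 ⊆ τ) := by
      intro τ hτ hτS
      constructor
      · intro hσ1'' hsub
        have : σ1 = τ := eq_of_antichain hA''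
          (by exact_mod_cast hσ1'') (by exact_mod_cast hτ) hsub
        exact hσ1S (this ▸ hτS)
      · intro hσ2'' hsub
        have : σ2 = τ := eq_of_antichain hA''
          (by exact_mod_cast hσ2'') (by exact_mod_cast hτ) hsub
        exact hσ2S (this ▸ hτS)
    by_cases hs1'' : σ1 ∈ S''
    · by_cases hs2'' : σ2 ∈ S''
      · -- S'' = S'
        refine hne2 ?_
        rw [hM]
        apply Finset.Subset.antisymm
        · intro τ hτ
          rcases hcls τ hτ with rfl | rfl | hτS
          · exact mem_insert_self _ _
          · exact mem_insert_of_mem (mem_insert_self _ _)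
          · exact mem_insert_of_mem (mem_insert_of_mem (mem_filter.mpr
              ⟨hτS, (hSin τ hτ hτS).1 hs1'', (hSin τ hτ hτS).2 hs2''⟩))
        · intro κ hκ
          rcases mem_insert.mp hκ with rfl | hκ'
          · exact hs1''
          · rcases mem_insert.mp hκ' with rfl | hκ''
            · exact hs2''
            · obtain ⟨hκS, hn1, hn2⟩ := mem_filter.mp hκ''
              obtain ⟨τ, hτ, hτκ⟩ := h1 κ hκS
              rcases hcls τ hτ with rfl | rfl | hτS
              · exact absurd hτκ hn1
              · exact absurd hτκ hn2
              · exact (eq_of_antichain hS.1 hτS hκS hτκ) ▸ hτ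
      · -- S'' = minElts (insert σ1 S), contradicting hnc1
        refine hnc1 ?_
        have hEq : S'' = minElts (insert σ1 S) := by
          rw [hM1]
          apply Finset.Subset.antisymm
          · intro τ hτ
            rcases hcls τ hτ with rfl | rfl | hτS
            · exact mem_insert_self _ _
            · exact absurd hτ hs2''
            · exact mem_insert_of_mem (mem_filter.mpr ⟨hτS, (hSin τ hτ hτS).1 hs1''⟩)
          · intro κ hκ
            rcases mem_insert.mp hκ with rfl | hκ'
            · exact hs1''
            · obtain ⟨hκS, hn1⟩ := mem_filter.mp hκ'
              obtain ⟨τ, hτ, hτκ⟩ := h1 κ hκS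
              rcases hcls τ hτ with rfl | rfl | hτS
              · exact absurd hτκ hn1
              · exact absurd hτ hs2''
              · exact (eq_of_antichain hS.1 hτS hκS hτκ) ▸ hτ
        exact hEq ▸ hC''
    · by_cases hs2'' : σ2 ∈ S''
      · -- S'' = minElts (insert σ2 S), contradicting hnc2
        refine hnc2 ?_
        have hEq : S'' = minElts (insert σ2 S) := by
          rw [hM2]
          apply Finset.Subset.antisymm
          · intro τ hτ
            rcases hcls τ hτ with rfl | rfl | hτS
            · exact absurd hτ hs1''
            · exact mem_insert_self _ _
            · exact mem_insert_of_mem (mem_filter.mpr ⟨hτS, (hSin τ hτ hτS).2 hs2''⟩)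
          · intro κ hκ
            rcases mem_insert.mp hκ with rfl | hκ'
            · exact hs2''
            · obtain ⟨hκS, hn2⟩ := mem_filter.mp hκ'
              obtain ⟨τ, hτ, hτκ⟩ := h1 κ hκS
              rcases hcls τ hτ with rfl | rfl | hτS
              · exact absurd hτ hs1''
              · exact absurd hτκ hn2
              · exact (eq_of_antichain hS.1 hτS hκS hτκ) ▸ hτ
        exact hEq ▸ hC''
      · -- S'' = S
        refine hne1 ?_
        apply Finset.Subset.antisymm
        · intro τ hτ
          rcases hcls τ hτ with rfl | rfl | hτS
          · exact absurd hτ hs1''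
          · exact absurd hτ hs2''
          · exact hτS
        · intro σ hσ
          obtain ⟨τ, hτ, hτσ⟩ := h1 σ hσ
          rcases hcls τ hτ with rfl | rfl | hτS
          · exact absurd hτ hs1''
          · exact absurd hτ hs2''
          · exact (eq_of_antichain hS.1 hτS hσ hτσ) ▸ hτ

end AuxParentRules

theorem parent_iff_rules (p : ℕ) (S S' : Finset (Finset (Fin p)))
    (hS : AntichainCover S) (hS' : AntichainCover S') :
    Parent S S' ↔
      (∃ c : Finset (Fin p), MaxIndependentOf c S ∧ S' = insert c S) ∨
      (∃ σ : Finset (Fin p), Rule2Cond S σ ∧ Covers (minElts (insert σ S)) ∧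
        S' = minElts (insert σ S)) ∨
      (∃ σ σ' : Finset (Fin p), σ ≠ σ' ∧ Rule2Cond S σ ∧ Rule2Cond S σ' ∧
        ¬ Covers (minElts (insert σ S)) ∧ ¬ Covers (minElts (insert σ' S)) ∧
        Covers (minElts (insert σ' (insert σ S))) ∧
        S' = minElts (insert σ' (insert σ S))) := by
  constructor
  · exact fun h => aux_forward S S' hS hS' h
  · rintro (⟨c, hcmax, rfl⟩ | ⟨σ, hR2, hcov, rfl⟩ |
      ⟨σ, σ', hne, hR21, hR22, hnc1, hnc2, hcov, rfl⟩)
    · exact aux_backward1 S hS c hcmax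
    · exact aux_backward2 S hS σ hR2
    · exact aux_backward3 S hS σ σ' hne hR21 hR22 hnc1 hnc2
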